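/- arXiv:1706.03669 — 2 statements merged into one kernel-verified Lean document; each statement's English description precedes it below -/
import Mathlib

section
/- Let t₀ ∈ ℝ₊. The evaluation map (x,t) ↦ x_t from D_exp(S) × [0,t₀] to S^Δ is measurable with respect to F_{t₀} ⊗ B([0,t₀]). Moreover, for t₀ > 0, the set A := {(x,t) ∈ D_exp(S) × (0,t₀] : the left limit x_{t−} exists in S^Δ} belongs to F_{t₀−} ⊗ B((0,t₀]), and the map (x,t) ↦ x_{t−} from A to S^Δ is F_{t₀−} ⊗ B((0,t₀])-measurable. -/
open Filter Topology Set MeasureTheory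
open scoped ENNReal NNReal

noncomputable section

namespace LocSkor

/-- Paths with values in the one-point compactification. -/
abbrev Path (S : Type*) := ℝ → OnePoint S

variable {S : Type*} [TopologicalSpace S]

/-- Distance between two points of `S^Δ`, with junk value `0` if one of them is `Δ`. -/
noncomputable def dd (ρ : S → S → ℝ) : OnePoint S → OnePoint S → ℝ :=
  fun a b => Option.elim (show Option S from a) 0
    (fun a' => Option.elim (show Option S from b) 0 (fun b' => ρ a' b'))

/-- The set of times at which the path has already exploded. -/
def xiSet (x : Path S) : Set ℝ := {t : ℝ | x t = OnePoint.infty}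

/-- The path explodes in finite time, i.e. `ξ(x) < ∞`. -/
def explodes (x : Path S) : Prop := (xiSet x).Nonempty

/-- The (real-valued) explosion time `ξ(x)`; junk value `0` if the path never explodes. -/
def xiR (x : Path S) : ℝ := sInf (xiSet x)

/-- The `[0,∞]`-valued explosion time `ξ(x)`. -/
def xiE (x : Path S) : ℝ≥0∞ := ⨅ t ∈ xiSet x, ENNReal.ofReal t

/-- The range `{x_s, 0 ≤ s < ξ(x)}` of the path, as a subset of `S`. -/
def pathRange (x : Path S) : Set S := {a : S | ∃ s : ℝ, 0 ≤ s ∧ x s = (a : OnePoint S)}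

/-- `x` is an exploding cadlag path: `x_t = Δ` exactly for `t ≥ ξ(x)` (and we normalize
`x` on negative times), `x` is right-continuous before explosion, and has left limits in `S`
at every point of `(0, ξ(x))`. -/
def IsDexp (x : Path S) : Prop :=
  (∀ t ≤ (0:ℝ), x t = x 0) ∧
  (∀ ⦃s t : ℝ⦄, s ≤ t → x s = OnePoint.infty → x t = OnePoint.infty) ∧
  IsClosed (xiSet x) ∧
  (∀ t : ℝ, 0 ≤ t → x t ≠ OnePoint.infty → Tendsto x (𝓝[>] t) (𝓝 (x t))) ∧
  (∀ t : ℝ, 0 < t → x t ≠ OnePoint.infty →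
    ∃ a : S, Tendsto x (𝓝[<] t) (𝓝 (a : OnePoint S)))

/-- `x` belongs to the local cadlag space `𝔻_loc(S)`. -/
def IsDloc (x : Path S) : Prop :=
  IsDexp x ∧
  ((explodes x ∧ 0 < xiR x ∧ IsCompact (closure (pathRange x))) →
    ∃ a : S, Tendsto x (𝓝[<] xiR x) (𝓝 (a : OnePoint S)))

/-- `x` belongs to the global cadlag space `𝔻(S)`, i.e. `ξ(x) = ∞`. -/
def IsDglob (x : Path S) : Prop := IsDexp x ∧ ∀ t : ℝ, x t ≠ OnePoint.infty

/-- `x` is a cadlag path with values in the compact space `S^Δ`, i.e. `x ∈ 𝔻(S^Δ)`. -/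
def IsCadlagDelta (x : Path S) : Prop :=
  (∀ t ≤ (0:ℝ), x t = x 0) ∧
  (∀ t : ℝ, 0 ≤ t → Tendsto x (𝓝[>] t) (𝓝 (x t))) ∧
  (∀ t : ℝ, 0 < t → ∃ a : OnePoint S, Tendsto x (𝓝[<] t) (𝓝 a))

/-- The space `𝔻_exp(S)` of exploding cadlag paths. -/
def DexpT (S : Type*) [TopologicalSpace S] : Type _ := {x : Path S // IsDexp x}

/-- The space `𝔻_loc(S)`. -/
def DlocT (S : Type*) [TopologicalSpace S] : Type _ := {x : Path S // IsDloc x}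

/-- The space `𝔻(S)`. -/
def DglobT (S : Type*) [TopologicalSpace S] : Type _ := {x : Path S // IsDglob x}

/-- The space `𝔻(S^Δ)`. -/
def DDeltaT (S : Type*) [TopologicalSpace S] : Type _ := {x : Path S // IsCadlagDelta x}

/-! ### Time changes `Λ̃` and `Λ` -/

/-- `l` is an increasing bijection of `ℝ₊` (extended by the identity on negative reals):
the class `Λ̃`. -/
def IsTimeBij (l : ℝ → ℝ) : Prop :=
  StrictMono l ∧ Function.Surjective l ∧ ∀ t ≤ (0:ℝ), l t = t

/-- `‖log λ̇‖_t ≤ ε`, expressed through slopes. -/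
def LogSlopeLe (l : ℝ → ℝ) (t ε : ℝ) : Prop :=
  ∀ s₁ s₂ : ℝ, 0 ≤ s₁ → s₁ < s₂ → s₂ ≤ t → |Real.log ((l s₂ - l s₁) / (s₂ - s₁))| ≤ ε

/-- `‖λ - id‖_t ≤ ε`. -/
def IdDistLe (l : ℝ → ℝ) (t ε : ℝ) : Prop := ∀ s : ℝ, 0 ≤ s → s ≤ t → |l s - s| ≤ ε

/-- `l` belongs to the class `Λ` of increasing bijections of `ℝ₊` which are locally
Lipschitz together with their inverses (equivalently, `‖log λ̇‖_t < ∞` for all `t`). -/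
def IsLipTimeBij (l : ℝ → ℝ) : Prop :=
  IsTimeBij l ∧ ∀ t : ℝ, 0 < t → ∃ C : ℝ, LogSlopeLe l t C

/-- `ξ(x) < ∞` together with the relative compactness in `S` of `{x_s, s < ξ(x)}`. -/
def Case1 (x : Path S) : Prop := explodes x ∧ IsCompact (closure (pathRange x))

/-- Convergence criterion of Theorem 2.6, parametrized by the class of time changes and
by the norm used on them. -/
def ConvGen (ρ : S → S → ℝ) (Lam : (ℝ → ℝ) → Prop) (Nrm : (ℝ → ℝ) → ℝ → ℝ → Prop)
    (xk : ℕ → Path S) (x : Path S) : Prop :=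
  ∃ l : ℕ → ℝ → ℝ, (∀ k, Lam (l k)) ∧
    (Case1 x →
      ((∀ᶠ k in atTop, ∀ s : ℝ, 0 ≤ s → s < l k (xiR x) → xk k s ≠ OnePoint.infty) ∧
      (∀ ε > (0:ℝ), ∀ᶠ k in atTop, ∀ s : ℝ, 0 ≤ s → s < xiR x →
        dd ρ (x s) (xk k (l k s)) ≤ ε) ∧
      Tendsto (fun k => xk k (l k (xiR x))) atTop (𝓝 (OnePoint.infty : OnePoint S)) ∧
      (∀ ε > (0:ℝ), ∀ᶠ k in atTop, Nrm (l k) (xiR x) ε))) ∧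
    (¬ Case1 x →
      ∀ t : ℝ, 0 ≤ t → x t ≠ OnePoint.infty →
        ((∀ᶠ k in atTop, xk k (l k t) ≠ OnePoint.infty) ∧
        (∀ ε > (0:ℝ), ∀ᶠ k in atTop, ∀ s : ℝ, 0 ≤ s → s ≤ t →
          dd ρ (x s) (xk k (l k s)) ≤ ε) ∧
        (∀ ε > (0:ℝ), ∀ᶠ k in atTop, Nrm (l k) t ε)))

/-- Convergence criterion of Theorem 2.6 (with `Λ` and `‖log λ̇‖`). -/
def ConvLoc (ρ : S → S → ℝ) (xk : ℕ → Path S) (x : Path S) : Prop :=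
  ConvGen ρ IsLipTimeBij LogSlopeLe xk x

/-- Convergence criterion of Theorem 2.7 (with `Λ̃` and `‖λ - id‖`). -/
def ConvLocTilde (ρ : S → S → ℝ) (xk : ℕ → Path S) (x : Path S) : Prop :=
  ConvGen ρ IsTimeBij IdDistLe xk x

/-! ### σ-algebras -/

/-- The Borel σ-algebra of `S^Δ`. -/
def msOP (S : Type*) [TopologicalSpace S] : MeasurableSpace (OnePoint S) := borel _

/-- The σ-algebra `𝓕_t = σ(X_s, 0 ≤ s ≤ t)`. -/
def filt {α : Type*} (ev : α → Path S) (t : ℝ) : MeasurableSpace α :=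
  ⨆ s ∈ Icc (0:ℝ) t, MeasurableSpace.comap (fun x => ev x s) (msOP S)

/-- The σ-algebra `𝓕_{t-} = σ(X_s, 0 ≤ s < t)`. -/
def filtLt {α : Type*} (ev : α → Path S) (t : ℝ) : MeasurableSpace α :=
  ⨆ s ∈ Ico (0:ℝ) t, MeasurableSpace.comap (fun x => ev x s) (msOP S)

/-- The σ-algebra `𝓕 = σ(X_s, 0 ≤ s < ∞)`. -/
def filtAll {α : Type*} (ev : α → Path S) : MeasurableSpace α :=
  ⨆ s ∈ Ici (0:ℝ), MeasurableSpace.comap (fun x => ev x s) (msOP S)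

/-- The σ-algebra `𝓕_{t+} = ⋂_{s>t} 𝓕_s`. -/
def filtPlus {α : Type*} (ev : α → Path S) (t : ℝ) : MeasurableSpace α :=
  ⨅ s ∈ Ioi t, filt ev s

/-- `τ` is an `(𝓕_t)`-stopping time. -/
def IsStopping {α : Type*} (ev : α → Path S) (τ : α → ℝ≥0∞) : Prop :=
  ∀ t : ℝ, 0 ≤ t → MeasurableSet[filt ev t] {x | τ x ≤ ENNReal.ofReal t}

open Classical in
/-- Evaluation of a path at a `[0,∞]`-valued time (`Δ` at time `∞`). -/
def evalE (x : Path S) (t : ℝ≥0∞) : OnePoint S :=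
  if t = ⊤ then OnePoint.infty else x t.toReal

open Classical in
/-- The left limit `x_{t-}`, junk value `Δ` if it does not exist. -/
def leftLimVal (x : Path S) (t : ℝ) : OnePoint S :=
  if h : ∃ a : OnePoint S, Tendsto x (𝓝[<] t) (𝓝 a) then h.choose else OnePoint.infty

/-- The exit time `τ^U = inf {t ≥ 0 | X_{t-} ∉ U or X_t ∉ U}`. -/
def tauU (U : Set S) (x : Path S) : ℝ≥0∞ :=
  ⨅ t ∈ {t : ℝ | 0 ≤ t ∧
      ((0 < t ∧ ¬ ∃ a ∈ U, Tendsto x (𝓝[<] t) (𝓝 (a : OnePoint S))) ∨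
        ¬ ∃ a ∈ U, x t = (a : OnePoint S))},
    ENNReal.ofReal t

/-! ### The modulus `ω'` -/

/-- The modulus of continuity `ω'_{t,K,x}(δ)` of (2.5), with values in `[0,∞]`. -/
def omegaMod (ρ : S → S → ℝ) (t : ℝ) (K : Set S) (x : Path S) (δ : ℝ) : ℝ≥0∞ :=
  ⨅ (p : ℕ × (ℕ → ℝ)) (_ : p.2 0 = 0 ∧ (∀ i < p.1, p.2 i + δ < p.2 (i + 1)) ∧
      (∀ s : ℝ, 0 ≤ s → s < p.2 p.1 → x s ≠ OnePoint.infty) ∧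
      ¬ (p.2 p.1 ≤ t ∧ ∃ a ∈ K, x (p.2 p.1) = (a : OnePoint S))),
    ⨆ (i : ℕ) (_ : i < p.1) (s₁ : ℝ) (_ : p.2 i ≤ s₁ ∧ s₁ < p.2 (i + 1))
      (s₂ : ℝ) (_ : p.2 i ≤ s₂ ∧ s₂ < p.2 (i + 1)),
      ENNReal.ofReal (dd ρ (x s₁) (x s₂))

/-! ### Skorokhod pseudo-metrics -/

open Classical in
/-- The penalty term `d(x_{t₁}, K^c) ∧ (t - t₁)_+ 𝟙_{t₁ < ξ(x)}` appearing in the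
definition of the pseudo-metrics (with the convention `d(a, ∅) = +∞`). -/
noncomputable def pen (ρ : S → S → ℝ) (t : ℝ) (K : Set S) (x : Path S) (t₁ : ℝ) : ℝ :=
  Option.elim (show Option S from x t₁) 0 (fun a =>
    if (Kᶜ : Set S).Nonempty then min (sInf ((fun b => ρ a b) '' (Kᶜ : Set S))) (max (t - t₁) 0)
    else max (t - t₁) 0)

open Classical in
/-- The set of admissible bounds in the definition of `ρ̃_{t,K}` (`useLip = false`) and of
`ρ_{t,K}` (`useLip = true`). -/
def rhoSet (useLip : Bool) (ρ : S → S → ℝ) (t : ℝ) (K : Set S) (x y : Path S) : Set ℝ :=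
  {r : ℝ | 0 ≤ r ∧ ∃ t₁ t₂ : ℝ, ∃ l : ℝ → ℝ, 0 ≤ t₁ ∧ 0 ≤ t₂ ∧ l t₁ = t₂ ∧
    (if useLip then IsLipTimeBij l else IsTimeBij l) ∧
    (∀ s : ℝ, 0 ≤ s → s < t₁ → x s ≠ OnePoint.infty) ∧
    (∀ s : ℝ, 0 ≤ s → s < t₂ → y s ≠ OnePoint.infty) ∧
    (∀ s : ℝ, 0 ≤ s → s < t₁ → dd ρ (x s) (y (l s)) ≤ r) ∧
    IdDistLe l t₁ r ∧
    (useLip = true → LogSlopeLe l t₁ r) ∧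
    pen ρ t K x t₁ ≤ r ∧ pen ρ t K y t₂ ≤ r}

/-- The pseudo-metric `ρ̃_{t,K}`. -/
noncomputable def rhoTilde (ρ : S → S → ℝ) (t : ℝ) (K : Set S) (x y : Path S) : ℝ :=
  sInf (rhoSet false ρ t K x y)

/-- The pseudo-metric `ρ_{t,K}`. -/
noncomputable def rhoMet (ρ : S → S → ℝ) (t : ℝ) (K : Set S) (x y : Path S) : ℝ :=
  sInf (rhoSet true ρ t K x y)

/-! ### Time change -/

/-- `g ∈ C^{≠0}(S, ℝ₊)`: `{g = 0}` is closed and `g` is continuous on `{g ≠ 0}`. -/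
def Czero (g : S → ℝ) : Prop :=
  (∀ a : S, 0 ≤ g a) ∧ IsClosed {a : S | g a = 0} ∧ ContinuousOn g {a : S | g a ≠ 0}

/-- `g ∈ C̃^{≠0}(S, ℝ₊)`: moreover `g` is bounded on every compact subset of `S`. -/
def CzeroLocBdd (g : S → ℝ) : Prop :=
  Czero g ∧ ∀ K : Set S, IsCompact K → ∃ C : ℝ, ∀ a ∈ K, g a ≤ C

/-- `g` extended to `S^Δ` by the junk value `0` at `Δ`. -/
def gOP (g : S → ℝ) : OnePoint S → ℝ := fun a => Option.elim (show Option S from a) 0 g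

open Classical in
/-- The additive functional `A^g_t(x) = ∫_0^t du / g(x_u)` for `t ∈ [0, τ^{{g≠0}}(x)]`,
and `+∞` otherwise. -/
noncomputable def Ag (g : S → ℝ) (x : Path S) (t : ℝ) : ℝ≥0∞ :=
  if 0 ≤ t ∧ ENNReal.ofReal t ≤ tauU {a : S | g a ≠ 0} x then
    ∫⁻ u in Ioo (0:ℝ) t, (ENNReal.ofReal (gOP g (x u)))⁻¹
  else ⊤

/-- The time change `τ^g_t(x) = inf {s ≥ 0 | A^g_s(x) ≥ t}`, for `t ∈ [0,∞]`. -/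
noncomputable def taug (g : S → ℝ) (x : Path S) (t : ℝ≥0∞) : ℝ≥0∞ :=
  ⨅ s ∈ {s : ℝ | 0 ≤ s ∧ t ≤ Ag g x s}, ENNReal.ofReal s

/-- The total mass `A^g_{τ^g_∞(x)}(x) = ∫_0^{τ^{{g≠0}}(x)} du / g(x_u)`. -/
noncomputable def Atotal (g : S → ℝ) (x : Path S) : ℝ≥0∞ :=
  ∫⁻ u in {u : ℝ | 0 < u ∧ ENNReal.ofReal u ≤ tauU {a : S | g a ≠ 0} x},
    (ENNReal.ofReal (gOP g (x u)))⁻¹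

/-- The filter of times converging to `t ∈ [0,∞]` from the left. -/
noncomputable def leftFilter (t : ℝ≥0∞) : Filter ℝ := if t = ⊤ then atTop else 𝓝[<] t.toReal

open Classical in
/-- The left limit `x_{t-}` at a `[0,∞]`-valued time, junk value `Δ` if it does not exist. -/
noncomputable def leftLimValE (x : Path S) (t : ℝ≥0∞) : OnePoint S :=
  if h : ∃ a : OnePoint S, Tendsto x (leftFilter t) (𝓝 a) then h.choose else OnePoint.infty

open Classical in
/-- The time-changed path `g·x` of Definition 3.1.  -/
noncomputable def timeChange (g : S → ℝ) (x : Path S) : Path S := fun t =>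
  if 0 ≤ t ∧ Atotal g x ≤ ENNReal.ofReal t ∧
      ∃ a : S, g a = 0 ∧ Tendsto x (leftFilter (tauU {b : S | g b ≠ 0} x)) (𝓝 (a : OnePoint S))
  then leftLimValE x (tauU {b : S | g b ≠ 0} x)
  else evalE x (taug g x (ENNReal.ofReal t))

/-- The constant path equal to `Δ`. -/
def deadPath (S : Type*) [TopologicalSpace S] : Path S := fun _ => OnePoint.infty

lemma isDexp_deadPath : IsDexp (deadPath S) := by
  refine ⟨fun _ _ => rfl, fun _ _ _ _ => rfl, ?_, ?_, ?_⟩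
  · have : xiSet (deadPath S) = univ := by ext t; simp [xiSet, deadPath]
    rw [this]; exact isClosed_univ
  · intro t _ h; exact absurd rfl h
  · intro t _ h; exact absurd rfl h

lemma isDloc_deadPath : IsDloc (deadPath S) := by
  refine ⟨isDexp_deadPath, ?_⟩
  rintro ⟨-, hxi, -⟩
  exfalso
  have huniv : xiSet (deadPath S) = univ := by ext t; simp [xiSet, deadPath]
  have : xiR (deadPath S) = 0 := by
    rw [xiR, huniv]
    exact Real.sInf_of_not_bddBelow (by simp [not_bddBelow_univ (α := ℝ)])
  rw [this] at hxi; exact lt_irrefl 0 hxi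

lemma isCadlagDelta_deadPath : IsCadlagDelta (deadPath S) :=
  ⟨fun _ _ => rfl, fun _ _ => tendsto_const_nhds, fun _ _ => ⟨OnePoint.infty, tendsto_const_nhds⟩⟩

open Classical in
/-- Packaging of a raw path as an element of `𝔻_loc(S)` (junk value if it is not one). -/
noncomputable def toDloc (y : Path S) : DlocT S :=
  if h : IsDloc y then ⟨y, h⟩ else ⟨deadPath S, isDloc_deadPath⟩

open Classical in
/-- Packaging of a raw path as an element of `𝔻(S^Δ)` (junk value if it is not one). -/
noncomputable def toDDelta (y : Path S) : DDeltaT S :=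
  if h : IsCadlagDelta y then ⟨y, h⟩ else ⟨deadPath S, isCadlagDelta_deadPath⟩

/-- Condition defining the continuity set `B` of Theorem 3.3, for a pair `(g, x)`. -/
def BCond (g : S → ℝ) (x : Path S) : Prop :=
  (tauU {a : S | g a ≠ 0} x < xiE x →
    ∀ t : ℝ, tauU {a : S | g a ≠ 0} x < ENNReal.ofReal t →
      ∫⁻ u in Ioo (0:ℝ) t, (ENNReal.ofReal (gOP g (x u)))⁻¹ = ⊤) ∧
  (Atotal g x < ⊤ →
    ∀ a : S, tauU {a : S | g a ≠ 0} x ≠ ⊤ →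
      Tendsto x (𝓝[<] (tauU {a : S | g a ≠ 0} x).toReal) (𝓝 (a : OnePoint S)) →
      g a = 0 → x ((tauU {a : S | g a ≠ 0} x).toReal) = (a : OnePoint S))

/-- `x_{ξ(x)-}` exists in `U` whenever `0 < ξ(x) < ∞`. -/
def limExistsIn (U : Set S) (y : Path S) : Prop :=
  (explodes y ∧ 0 < xiR y) → ∃ a ∈ U, Tendsto y (𝓝[<] xiR y) (𝓝 (a : OnePoint S))

/-! ### Global Skorokhod convergence -/

/-- Convergence in the global Skorokhod topology of `𝔻(S)` (Corollary 2.7). -/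
def ConvGlob (ρ : S → S → ℝ) (xk : ℕ → Path S) (x : Path S) : Prop :=
  ∃ l : ℕ → ℝ → ℝ, (∀ k, IsLipTimeBij (l k)) ∧ ∀ t : ℝ, 0 ≤ t →
    (∀ ε > (0:ℝ), ∀ᶠ k in atTop, ∀ s : ℝ, 0 ≤ s → s ≤ t → dd ρ (x s) (xk k (l k s)) ≤ ε) ∧
    (∀ ε > (0:ℝ), ∀ᶠ k in atTop, LogSlopeLe (l k) t ε)

/-- Convergence in the global Skorokhod topology of `𝔻(S^Δ)`, written with entourages of the
(unique) uniformity of the compact space `S^Δ` (equivalently, with any compatible metric). -/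
def ConvGlobDelta (xk : ℕ → Path S) (x : Path S) : Prop :=
  ∃ l : ℕ → ℝ → ℝ, (∀ k, IsTimeBij (l k)) ∧ ∀ t : ℝ, 0 ≤ t →
    (∀ V ∈ 𝓝ˢ (Set.diagonal (OnePoint S)), ∀ᶠ k in atTop,
      ∀ s : ℝ, 0 ≤ s → s ≤ t → ((x s, xk k (l k s)) : OnePoint S × OnePoint S) ∈ V) ∧
    (∀ ε > (0:ℝ), ∀ᶠ k in atTop, IdDistLe (l k) t ε)

/-! ### Markov families -/

/-- The shifted path `(X_{t₀+t})_{t≥0}`, at a `[0,∞]`-valued time `t₀`. -/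
noncomputable def shiftE (x : Path S) (t₀ : ℝ≥0∞) : Path S := fun t =>
  if t₀ = ⊤ then OnePoint.infty else x (t₀.toReal + max t 0)

/-- Conditions a), b) in the definition of a Markov family (together with the
normalisation `P_Δ(ξ = 0) = 1`). -/
def MarkovBase {α : Type*} (ev : α → Path S)
    (P : OnePoint S → @Measure α (filtAll ev)) : Prop :=
  (∀ a : OnePoint S, @IsProbabilityMeasure α (filtAll ev) (P a)) ∧
  (∀ B : Set α, MeasurableSet[filtAll ev] B →
    @Measurable S ℝ≥0∞ (borel S) inferInstance (fun a : S => P (a : OnePoint S) B)) ∧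
  (∀ a : S, P (a : OnePoint S) {x | ev x 0 = (a : OnePoint S)} = 1) ∧
  (P OnePoint.infty {x | ev x 0 = OnePoint.infty} = 1)

/-- Condition c) in the definition of a `(𝓖_t)`-Markov family. -/
def MarkovProp {α : Type*} (ev : α → Path S) (G : ℝ → MeasurableSpace α)
    (P : OnePoint S → @Measure α (filtAll ev)) : Prop :=
  ∀ (a : OnePoint S) (t₀ : ℝ), 0 ≤ t₀ →
    ∀ B : Set (Path S), MeasurableSet[filtAll (id : Path S → Path S)] B →
      ∀ A : Set α, MeasurableSet[G t₀] A →
        P a (A ∩ {x | (fun t => ev x (t₀ + max t 0)) ∈ B}) =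
          ∫⁻ x in A, P (ev x t₀) {y | ev y ∈ B} ∂(P a)

/-- Condition c) for a `(𝓖_t)`-strong Markov family: the Markov property at every
`(𝓖_t)`-stopping time. -/
def StrongMarkovProp {α : Type*} (ev : α → Path S) (G : ℝ → MeasurableSpace α)
    (P : OnePoint S → @Measure α (filtAll ev)) : Prop :=
  ∀ (a : OnePoint S) (τ : α → ℝ≥0∞),
    (∀ t : ℝ, 0 ≤ t → MeasurableSet[G t] {x | τ x ≤ ENNReal.ofReal t}) →
    ∀ B : Set (Path S), MeasurableSet[filtAll (id : Path S → Path S)] B →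
      ∀ A : Set α, MeasurableSet[filtAll ev] A →
        (∀ t : ℝ, 0 ≤ t → MeasurableSet[G t] (A ∩ {x | τ x ≤ ENNReal.ofReal t})) →
        P a (A ∩ {x | shiftE (ev x) (τ x) ∈ B}) =
          ∫⁻ x in A, P (evalE (ev x) (τ x)) {y | ev y ∈ B} ∂(P a)

/-! ### Auxiliary material for Proposition 2.2 -/

section Prop22Aux

instance onePoint_secondCountable (S : Type*) [TopologicalSpace S] [T2Space S]
    [SecondCountableTopology S] [LocallyCompactSpace S] :
    SecondCountableTopology (OnePoint S) := by
  obtain ⟨b, hbc, -, hb⟩ := TopologicalSpace.exists_countable_basis S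
  let K := CompactExhaustion.choice S
  set B : Set (Set (OnePoint S)) :=
    ((fun s : Set S => ((↑) '' s : Set (OnePoint S))) '' b) ∪
      (range fun n : ℕ => (((↑) '' (K n) : Set (OnePoint S)))ᶜ) with hB
  have hopen : ∀ u ∈ B, IsOpen u := by
    rintro u (⟨s, hs, rfl⟩ | ⟨n, rfl⟩)
    · exact OnePoint.isOpen_image_coe.2 (hb.isOpen hs)
    · exact OnePoint.isOpen_compl_image_coe.2 ⟨(K.isCompact n).isClosed, K.isCompact n⟩
  refine (TopologicalSpace.isTopologicalBasis_of_isOpen_of_nhds hopen ?_).secondCountableTopology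
    ((hbc.image _).union (countable_range _))
  intro a u hau hu
  induction a using OnePoint.rec with
  | infty =>
      have hcpt : IsCompact ((((↑) : S → OnePoint S) ⁻¹' u)ᶜ) :=
        ((OnePoint.isOpen_iff_of_mem' hau).1 hu).1
      obtain ⟨n, hn⟩ := K.exists_superset_of_isCompact hcpt
      refine ⟨(((↑) '' (K n) : Set (OnePoint S)))ᶜ, Or.inr ⟨n, rfl⟩, ?_, ?_⟩
      · simp [OnePoint.infty_notMem_image_coe]
      · intro z hz
        induction z using OnePoint.rec with
        | infty => exact hau
        | coe y =>
            by_contra hy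
            exact hz (mem_image_of_mem _ (hn (fun h : (y : OnePoint S) ∈ u => hy h)))
  | coe x =>
      have hxo : IsOpen (((↑) : S → OnePoint S) ⁻¹' u) := hu.preimage OnePoint.continuous_coe
      obtain ⟨s, hs, hxs, hsu⟩ := hb.exists_subset_of_mem_open (show x ∈ _ from hau) hxo
      exact ⟨(↑) '' s, Or.inl ⟨s, hs, rfl⟩, mem_image_of_mem _ hxs,
        (image_mono hsu).trans (image_preimage_subset _ _)⟩

variable {S : Type*} [MetricSpace S] [SecondCountableTopology S] [LocallyCompactSpace S]

/-- A compatible metric on `S^Δ`. -/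
noncomputable instance : MetricSpace (OnePoint S) :=
  TopologicalSpace.metrizableSpaceMetric _

/-- An exploding cadlag path is right-continuous (into `S^Δ`) at every nonnegative time. -/
lemma IsDexp.tendsto_right {x : Path S} (hx : IsDexp x) {s : ℝ} (hs : 0 ≤ s) :
    Tendsto x (𝓝[≥] s) (𝓝 (x s)) := by
  have h1 : Tendsto x (𝓝[>] s) (𝓝 (x s)) := by
    by_cases h : x s = OnePoint.infty
    · refine Tendsto.congr' (eventually_nhdsWithin_of_forall fun u hu => ?_) tendsto_const_nhds
      rw [h]; exact (hx.2.1 (le_of_lt hu) h).symm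
    · exact hx.2.2.2.1 s hs h
  rw [← Set.Ioi_insert, nhdsWithin_insert]
  exact tendsto_sup.2 ⟨tendsto_pure_nhds x s, h1⟩

/-- Measurability of coordinates with respect to `𝓕_{t₀}`. -/
lemma measurable_coord_filt {t₀ s : ℝ} (hs0 : 0 ≤ s) (hst : s ≤ t₀) :
    Measurable[filt (Subtype.val : DexpT S → Path S) t₀, msOP S]
      (fun x : DexpT S => x.1 s) :=
  Measurable.of_comap_le (le_iSup₂ (f := fun (s : ℝ) (_ : s ∈ Icc (0:ℝ) t₀) =>
    MeasurableSpace.comap (fun x : DexpT S => x.1 s) (msOP S)) s ⟨hs0, hst⟩)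

/-- Measurability of coordinates with respect to `𝓕_{t₀-}`. -/
lemma measurable_coord_filtLt {t₀ s : ℝ} (hs0 : 0 ≤ s) (hst : s < t₀) :
    Measurable[filtLt (Subtype.val : DexpT S → Path S) t₀, msOP S]
      (fun x : DexpT S => x.1 s) :=
  Measurable.of_comap_le (le_iSup₂ (f := fun (s : ℝ) (_ : s ∈ Ico (0:ℝ) t₀) =>
    MeasurableSpace.comap (fun x : DexpT S => x.1 s) (msOP S)) s ⟨hs0, hst⟩)

/-- Joint measurability of the evaluation at a countably-valued measurable time. -/
lemma measurable_eval_comp {T : Type*} [mT : MeasurableSpace T]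
    (m₁ : MeasurableSpace (DexpT S)) (φ : T → ℝ) (hφ : Measurable φ)
    (hc : (range φ).Countable)
    (hm : ∀ s ∈ range φ, Measurable[m₁, msOP S] (fun x : DexpT S => x.1 s)) :
    Measurable[m₁.prod mT, msOP S] (fun p : DexpT S × T => p.1.1 (φ p.2)) := by
  letI := m₁
  letI mOP : MeasurableSpace (OnePoint S) := msOP S
  intro B hB
  have hEq : (fun p : DexpT S × T => p.1.1 (φ p.2)) ⁻¹' B =
      ⋃ s ∈ range φ, ((fun x : DexpT S => x.1 s) ⁻¹' B) ×ˢ (φ ⁻¹' {s}) := by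
    ext p
    simp only [mem_preimage, mem_iUnion, mem_prod, mem_singleton_iff]
    constructor
    · intro h; exact ⟨φ p.2, mem_range_self _, h, rfl⟩
    · rintro ⟨s, -, hB', rfl⟩; exact hB'
  rw [hEq]
  exact MeasurableSet.biUnion hc fun s hs =>
    ((hm s hs) hB).prod (hφ (measurableSet_singleton s))

/-- The rational points approaching `s` strictly from the right form a nontrivial filter. -/
lemma ratRight_neBot (s : ℝ) :
    (𝓝[>] s ⊓ 𝓟 (range ((↑) : ℚ → ℝ))).NeBot := by
  rw [← nhdsWithin_inter']
  rw [← mem_closure_iff_nhdsWithin_neBot]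
  rw [mem_closure_iff_nhds]
  intro U hU
  obtain ⟨ε, hε, hball⟩ := Metric.mem_nhds_iff.1 hU
  obtain ⟨q, hq1, hq2⟩ := exists_rat_btwn (show s < s + ε by linarith)
  refine ⟨(q : ℝ), hball ?_, hq1, q, rfl⟩
  rw [Real.ball_eq_Ioo]
  exact ⟨by linarith, hq2⟩

/-- Cauchy-type characterization (through rational times) of the existence of the left limit
of an exploding cadlag path at a positive time. -/
lemma exists_leftLim_iff {x : Path S} (hx : IsDexp x) {t : ℝ} (ht : 0 < t) :
    (∃ a : OnePoint S, Tendsto x (𝓝[<] t) (𝓝 a)) ↔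
      ∀ n : ℕ, ∃ q : ℚ, 0 ≤ (q : ℝ) ∧ (q : ℝ) < t ∧ ∀ r₁ r₂ : ℚ,
        ((q : ℝ) < r₁ ∧ (r₁ : ℝ) < t ∧ (q : ℝ) < r₂ ∧ (r₂ : ℝ) < t) →
        dist (x r₁) (x r₂) ≤ 1 / (n + 1) := by
  constructor
  · rintro ⟨a, ha⟩ n
    have hball : Metric.ball a (1 / (2 * (n + 1))) ∈ 𝓝 a :=
      Metric.ball_mem_nhds a (by positivity)
    obtain ⟨l, hl, hsub⟩ := mem_nhdsLT_iff_exists_Ioo_subset.1 (ha hball)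
    obtain ⟨q, hq1, hq2⟩ := exists_rat_btwn (show max l 0 < t from max_lt hl ht)
    have hq0 : (0 : ℝ) ≤ q := le_of_lt (lt_of_le_of_lt (le_max_right l 0) hq1)
    have hql : l < (q : ℝ) := lt_of_le_of_lt (le_max_left l 0) hq1
    refine ⟨q, hq0, hq2, fun r₁ r₂ ⟨h1, h2, h3, h4⟩ => ?_⟩
    have m1 : x r₁ ∈ Metric.ball a (1 / (2 * (n + 1))) := hsub ⟨hql.trans h1, h2⟩
    have m2 : x r₂ ∈ Metric.ball a (1 / (2 * (n + 1))) := hsub ⟨hql.trans h3, h4⟩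
    rw [Metric.mem_ball] at m1 m2
    have htri : dist (x r₁) (x r₂) ≤ dist (x r₁) a + dist (x r₂) a :=
      dist_triangle_right _ _ _
    have heq : 1 / (2 * ((n : ℝ) + 1)) + 1 / (2 * ((n : ℝ) + 1)) = 1 / ((n : ℝ) + 1) := by
      rw [← add_div, div_eq_div_iff (by positivity) (by positivity)]
      ring
    linarith
  · intro H
    have hne : (𝓝[<] t).NeBot := nhdsLT_neBot t
    -- the path is Cauchy along `𝓝[<] t`
    have hC : Cauchy (map x (𝓝[<] t)) := by
      rw [Metric.cauchy_iff]
      refine ⟨map_neBot, fun ε hε => ?_⟩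
      obtain ⟨n, hn⟩ := exists_nat_one_div_lt hε
      obtain ⟨q, hq0, hqt, hq⟩ := H n
      -- bound for a real time and a rational time
      have C1 : ∀ s ∈ Ioo (q : ℝ) t, ∀ r : ℚ, (q : ℝ) < r → (r : ℝ) < t →
          dist (x s) (x r) ≤ 1 / (n + 1) := by
        intro s hs r hr1 hr2
        haveI := ratRight_neBot s
        have htd : Tendsto (fun u => dist (x u) (x r))
            (𝓝[>] s ⊓ 𝓟 (range ((↑) : ℚ → ℝ))) (𝓝 (dist (x s) (x r))) := by
          refine Tendsto.dist ?_ tendsto_const_nhds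
          exact (hx.tendsto_right (le_of_lt (hq0.trans_lt hs.1))).mono_left
            (inf_le_left.trans (nhdsWithin_mono s Ioi_subset_Ici_self))
        refine le_of_tendsto htd ?_
        have h1 : ∀ᶠ u in 𝓝[>] s ⊓ 𝓟 (range ((↑) : ℚ → ℝ)), u ∈ Ioi s :=
          eventually_inf_principal.2 (eventually_mem_nhdsWithin.mono fun u hu _ => hu)
        have h2 : ∀ᶠ u in 𝓝[>] s ⊓ 𝓟 (range ((↑) : ℚ → ℝ)), u < t :=
          Eventually.filter_mono (inf_le_left.trans nhdsWithin_le_nhds)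
            (Filter.Tendsto.eventually_lt_const hs.2 tendsto_id)
        have h3 : ∀ᶠ u in 𝓝[>] s ⊓ 𝓟 (range ((↑) : ℚ → ℝ)),
            u ∈ range ((↑) : ℚ → ℝ) :=
          eventually_inf_principal.2 (Eventually.of_forall fun u hu => hu)
        filter_upwards [h1, h2, h3] with u hu1 hu2 hu3
        obtain ⟨r₁, rfl⟩ := hu3
        exact hq r₁ r ⟨hs.1.trans hu1, hu2, hr1, hr2⟩
      have C2 : ∀ s₁ ∈ Ioo (q : ℝ) t, ∀ s₂ ∈ Ioo (q : ℝ) t,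
          dist (x s₁) (x s₂) ≤ 1 / (n + 1) := by
        intro s₁ hs₁ s₂ hs₂
        haveI := ratRight_neBot s₂
        have htd : Tendsto (fun u => dist (x s₁) (x u))
            (𝓝[>] s₂ ⊓ 𝓟 (range ((↑) : ℚ → ℝ))) (𝓝 (dist (x s₁) (x s₂))) := by
          refine Tendsto.dist tendsto_const_nhds ?_
          exact (hx.tendsto_right (le_of_lt (hq0.trans_lt hs₂.1))).mono_left
            (inf_le_left.trans (nhdsWithin_mono s₂ Ioi_subset_Ici_self))
        refine le_of_tendsto htd ?_
        have h1 : ∀ᶠ u in 𝓝[>] s₂ ⊓ 𝓟 (range ((↑) : ℚ → ℝ)), u ∈ Ioi s₂ :=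
          eventually_inf_principal.2 (eventually_mem_nhdsWithin.mono fun u hu _ => hu)
        have h2 : ∀ᶠ u in 𝓝[>] s₂ ⊓ 𝓟 (range ((↑) : ℚ → ℝ)), u < t :=
          Eventually.filter_mono (inf_le_left.trans nhdsWithin_le_nhds)
            (Filter.Tendsto.eventually_lt_const hs₂.2 tendsto_id)
        have h3 : ∀ᶠ u in 𝓝[>] s₂ ⊓ 𝓟 (range ((↑) : ℚ → ℝ)),
            u ∈ range ((↑) : ℚ → ℝ) :=
          eventually_inf_principal.2 (Eventually.of_forall fun u hu => hu)
        filter_upwards [h1, h2, h3] with u hu1 hu2 hu3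
        obtain ⟨r, rfl⟩ := hu3
        exact C1 s₁ hs₁ r (hs₂.1.trans hu1) hu2
      refine ⟨x '' Ioo (q : ℝ) t, image_mem_map
        (Ioo_mem_nhdsLT_of_mem ⟨hqt, le_refl t⟩), ?_⟩
      rintro u ⟨s₁, hs₁, rfl⟩ v ⟨s₂, hs₂, rfl⟩
      exact lt_of_le_of_lt (C2 s₁ hs₁ s₂ hs₂) hn
    obtain ⟨a, ha⟩ := CompleteSpace.complete hC
    exact ⟨a, ha⟩

/-- Joint measurability of `(x, u) ↦ x_{σ(u)}`, where `σ` is a `[0, c]`-valued measurable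
time and all coordinates in `[0, c]` are `m₁`-measurable. -/
lemma measurable_eval_of_upper {T : Type*} [mT : MeasurableSpace T]
    (m₁ : MeasurableSpace (DexpT S)) (σ : T → ℝ) (c : ℝ) (hσm : Measurable σ)
    (hσ0 : ∀ u, 0 ≤ σ u) (hσc : ∀ u, σ u ≤ c)
    (hm : ∀ s : ℝ, 0 ≤ s → s ≤ c → Measurable[m₁, msOP S] (fun x : DexpT S => x.1 s)) :
    Measurable[m₁.prod mT, msOP S] (fun p : DexpT S × T => p.1.1 (σ p.2)) := by
  letI := m₁
  letI mOP : MeasurableSpace (OnePoint S) := msOP S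
  haveI : BorelSpace (OnePoint S) := ⟨rfl⟩
  set φ : ℕ → T → ℝ := fun m u => min ((⌈σ u * 2 ^ m⌉ : ℤ) / 2 ^ m) c with hφdef
  have hφm : ∀ m, Measurable (φ m) := by
    intro m
    exact (measurable_from_top (f := fun k : ℤ => min ((k : ℝ) / 2 ^ m) c)).comp
      (Int.measurable_ceil.comp (hσm.mul_const _))
  have hφ0 : ∀ m u, 0 ≤ φ m u := by
    intro m u
    refine le_min (div_nonneg ?_ (by positivity)) ((hσ0 u).trans (hσc u))
    exact_mod_cast Int.ceil_nonneg (mul_nonneg (hσ0 u) (by positivity))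
  have hφc : ∀ m u, φ m u ≤ c := fun m u => min_le_right _ _
  have hφge : ∀ m u, σ u ≤ φ m u := by
    intro m u
    refine le_min ?_ (hσc u)
    rw [le_div_iff₀ (by positivity : (0:ℝ) < 2 ^ m)]
    exact Int.le_ceil _
  have hφle : ∀ m u, φ m u ≤ σ u + (1 / 2 : ℝ) ^ m := by
    intro m u
    refine (min_le_left _ _).trans ?_
    rw [div_le_iff₀ (by positivity : (0:ℝ) < 2 ^ m)]
    have h1 : ((⌈σ u * 2 ^ m⌉ : ℤ) : ℝ) < σ u * 2 ^ m + 1 := Int.ceil_lt_add_one _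
    have h2 : (1 / 2 : ℝ) ^ m * 2 ^ m = 1 := by
      rw [← mul_pow]; norm_num
    nlinarith [h1, h2]
  have hcnt : ∀ m, (range (φ m)).Countable := by
    intro m
    have : range (φ m) ⊆ range (fun k : ℤ => min ((k : ℝ) / 2 ^ m) c) := by
      rintro s ⟨u, rfl⟩; exact ⟨⌈σ u * 2 ^ m⌉, rfl⟩
    exact (countable_range _).mono this
  have hmeas : ∀ m, Measurable[m₁.prod mT, msOP S]
      (fun p : DexpT S × T => p.1.1 (φ m p.2)) := fun m =>
    measurable_eval_comp m₁ (φ m) (hφm m) (hcnt m)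
      (fun s hs => hm s (let ⟨u, hu⟩ := hs; hu ▸ hφ0 m u)
        (let ⟨u, hu⟩ := hs; hu ▸ hφc m u))
  refine measurable_of_tendsto_metrizable hmeas (tendsto_pi_nhds.2 fun p => ?_)
  have htφ : Tendsto (fun m => φ m p.2) atTop (𝓝[≥] (σ p.2)) := by
    rw [tendsto_nhdsWithin_iff]
    constructor
    · refine tendsto_of_tendsto_of_tendsto_of_le_of_le (g := fun _ => σ p.2)
        (h := fun m => σ p.2 + (1 / 2 : ℝ) ^ m) tendsto_const_nhds ?_
        (fun m => hφge m p.2) (fun m => hφle m p.2)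
      have := tendsto_const_nhds (x := σ p.2) (f := atTop (α := ℕ))|>.add
        (tendsto_pow_atTop_nhds_zero_of_lt_one (by norm_num : (0:ℝ) ≤ 1/2)
          (by norm_num : (1/2 : ℝ) < 1))
      simpa using this
    · exact Eventually.of_forall fun m => hφge m p.2
  exact (p.1.2.tendsto_right (hσ0 p.2)).comp htφ

end Prop22Aux

/-- Proposition 2.2, first two parts. Let `t₀ ∈ ℝ₊`. The evaluation map
`(x, t) ↦ x_t` from `𝔻_exp(S) × [0, t₀]` to `S^Δ` is `𝓕_{t₀} ⊗ ℬ([0,t₀])`-measurable.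
Moreover, for `t₀ > 0`, the set `A` of pairs `(x, t) ∈ 𝔻_exp(S) × (0, t₀]` such that the left
limit `x_{t-}` exists in `S^Δ` belongs to `𝓕_{t₀-} ⊗ ℬ((0,t₀])`, and the map `(x,t) ↦ x_{t-}`
from `A` to `S^Δ` is `𝓕_{t₀-} ⊗ ℬ((0,t₀])`-measurable. -/
theorem evaluation_and_left_limit_measurable
    {S : Type*} [MetricSpace S] [SecondCountableTopology S] [LocallyCompactSpace S]
    (t₀ : ℝ) (ht₀ : 0 ≤ t₀) :
    @Measurable (DexpT S × Icc (0:ℝ) t₀) (OnePoint S)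
      (MeasurableSpace.prod (filt (Subtype.val : DexpT S → Path S) t₀)
        (MeasurableSpace.comap (Subtype.val : Icc (0:ℝ) t₀ → ℝ) inferInstance))
      (msOP S) (fun p => p.1.1 (p.2 : ℝ)) ∧
    (0 < t₀ →
      MeasurableSet[MeasurableSpace.prod (filtLt (Subtype.val : DexpT S → Path S) t₀)
          (MeasurableSpace.comap (Subtype.val : Ioc (0:ℝ) t₀ → ℝ) inferInstance)]
        {p : DexpT S × Ioc (0:ℝ) t₀ |
          ∃ a : OnePoint S, Tendsto p.1.1 (𝓝[<] (p.2 : ℝ)) (𝓝 a)} ∧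
      @Measurable
        {p : DexpT S × Ioc (0:ℝ) t₀ // ∃ a : OnePoint S, Tendsto p.1.1 (𝓝[<] (p.2 : ℝ)) (𝓝 a)}
        (OnePoint S)
        (MeasurableSpace.comap Subtype.val
          (MeasurableSpace.prod (filtLt (Subtype.val : DexpT S → Path S) t₀)
            (MeasurableSpace.comap (Subtype.val : Ioc (0:ℝ) t₀ → ℝ) inferInstance)))
        (msOP S) (fun q => leftLimVal q.1.1.1 (q.1.2 : ℝ))) := by
  constructor
  · -- Part 1: evaluation
    exact measurable_eval_of_upper (filt (Subtype.val : DexpT S → Path S) t₀)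
      (fun u : Icc (0:ℝ) t₀ => (u : ℝ)) t₀ measurable_subtype_coe (fun u => u.2.1)
      (fun u => u.2.2) (fun s h0 h1 => measurable_coord_filt h0 h1)
  · intro ht₀
    letI mD : MeasurableSpace (DexpT S) := filtLt (Subtype.val : DexpT S → Path S) t₀
    letI mOP : MeasurableSpace (OnePoint S) := msOP S
    haveI : BorelSpace (OnePoint S) := ⟨rfl⟩
    have hAset : MeasurableSet {p : DexpT S × Ioc (0:ℝ) t₀ |
        ∃ a : OnePoint S, Tendsto p.1.1 (𝓝[<] (p.2 : ℝ)) (𝓝 a)} := by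
      have hEq : {p : DexpT S × Ioc (0:ℝ) t₀ |
          ∃ a : OnePoint S, Tendsto p.1.1 (𝓝[<] (p.2 : ℝ)) (𝓝 a)} =
          ⋂ n : ℕ, ⋃ q : ℚ, (if 0 ≤ (q : ℝ) then
            ({p : DexpT S × Ioc (0:ℝ) t₀ | (q : ℝ) < (p.2 : ℝ)} ∩
              ⋂ r₁ : ℚ, ⋂ r₂ : ℚ, {p : DexpT S × Ioc (0:ℝ) t₀ |
                ((q : ℝ) < r₁ ∧ (r₁ : ℝ) < (p.2 : ℝ) ∧ (q : ℝ) < r₂ ∧ (r₂ : ℝ) < (p.2 : ℝ)) →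
                  dist (p.1.1 r₁) (p.1.1 r₂) ≤ 1 / (n + 1)}) else (∅ : Set _)) := by
        ext p
        rw [mem_setOf_eq, exists_leftLim_iff p.1.2 p.2.2.1]
        simp only [mem_iInter, mem_iUnion]
        refine forall_congr' fun n => exists_congr fun q => ?_
        by_cases hq : 0 ≤ (q : ℝ)
        · simp only [if_pos hq, mem_inter_iff, mem_setOf_eq, mem_iInter]
          exact ⟨fun ⟨h0, h1, h2⟩ => ⟨h1, fun r₁ r₂ h => h2 r₁ r₂ h⟩,
            fun ⟨h1, h2⟩ => ⟨hq, h1, fun r₁ r₂ h => h2 r₁ r₂ h⟩⟩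
        · simp only [if_neg hq, mem_empty_iff_false, iff_false]
          exact fun h => hq h.1
      rw [hEq]
      refine MeasurableSet.iInter fun n => MeasurableSet.iUnion fun q => ?_
      by_cases hq : 0 ≤ (q : ℝ)
      · rw [if_pos hq]
        refine MeasurableSet.inter ?_
          (MeasurableSet.iInter fun r₁ => MeasurableSet.iInter fun r₂ => ?_)
        · exact (measurable_subtype_coe.comp measurable_snd) measurableSet_Ioi
        · by_cases hr : (q : ℝ) < r₁ ∧ (q : ℝ) < r₂ ∧ (r₁ : ℝ) < t₀ ∧ (r₂ : ℝ) < t₀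
          · have hset : {p : DexpT S × Ioc (0:ℝ) t₀ |
                ((q : ℝ) < r₁ ∧ (r₁ : ℝ) < (p.2 : ℝ) ∧ (q : ℝ) < r₂ ∧ (r₂ : ℝ) < (p.2 : ℝ)) →
                  dist (p.1.1 r₁) (p.1.1 r₂) ≤ 1 / (n + 1)} =
                ({p : DexpT S × Ioc (0:ℝ) t₀ |
                    (r₁ : ℝ) < (p.2 : ℝ) ∧ (r₂ : ℝ) < (p.2 : ℝ)})ᶜ ∪
                  {p : DexpT S × Ioc (0:ℝ) t₀ |
                    dist (p.1.1 r₁) (p.1.1 r₂) ≤ 1 / (n + 1)} := by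
              ext p
              simp only [mem_setOf_eq, mem_union, mem_compl_iff]
              constructor
              · intro h
                by_cases hant : (r₁ : ℝ) < (p.2 : ℝ) ∧ (r₂ : ℝ) < (p.2 : ℝ)
                · exact Or.inr (h ⟨hr.1, hant.1, hr.2.1, hant.2⟩)
                · exact Or.inl hant
              · rintro (h | h) ⟨h1, h2, h3, h4⟩
                · exact absurd ⟨h2, h4⟩ h
                · exact h
            rw [hset]
            refine MeasurableSet.union (MeasurableSet.compl ?_) ?_
            · exact MeasurableSet.inter
                ((measurable_subtype_coe.comp measurable_snd) measurableSet_Ioi)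
                ((measurable_subtype_coe.comp measurable_snd) measurableSet_Ioi)
            · have hd : Measurable (fun p : DexpT S × Ioc (0:ℝ) t₀ =>
                  dist (p.1.1 (r₁ : ℝ)) (p.1.1 (r₂ : ℝ))) :=
                Measurable.dist
                  ((measurable_coord_filtLt (hq.trans hr.1.le) hr.2.2.1).comp measurable_fst)
                  ((measurable_coord_filtLt (hq.trans hr.2.1.le) hr.2.2.2).comp measurable_fst)
              exact hd measurableSet_Iic
          · have hset : {p : DexpT S × Ioc (0:ℝ) t₀ |
                ((q : ℝ) < r₁ ∧ (r₁ : ℝ) < (p.2 : ℝ) ∧ (q : ℝ) < r₂ ∧ (r₂ : ℝ) < (p.2 : ℝ)) →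
                  dist (p.1.1 r₁) (p.1.1 r₂) ≤ 1 / (n + 1)} = univ :=
              eq_univ_of_forall fun p h =>
                absurd ⟨h.1, h.2.2.1, h.2.1.trans_le p.2.2.2, h.2.2.2.trans_le p.2.2.2⟩ hr
            rw [hset]
            exact MeasurableSet.univ
      · rw [if_neg hq]
        exact MeasurableSet.empty
    refine ⟨hAset, ?_⟩
    -- the left-limit map
    set sf : ℕ → ℝ → ℝ := fun n v => max (v - 1 / ((n : ℝ) + 1)) (v / 2) with hsfdef
    set c : ℕ → ℝ := fun n => max (t₀ - 1 / ((n : ℝ) + 1)) (t₀ / 2) with hcdef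
    have hsf_nonneg : ∀ n, ∀ u : Ioc (0:ℝ) t₀, 0 ≤ sf n (u : ℝ) :=
      fun n u => le_trans (by linarith [u.2.1]) (le_max_right _ _)
    have hsf_le_c : ∀ n, ∀ u : Ioc (0:ℝ) t₀, sf n (u : ℝ) ≤ c n :=
      fun n u => max_le_max (by linarith [u.2.2]) (by linarith [u.2.2])
    have hc_lt : ∀ n, c n < t₀ := fun n =>
      max_lt (sub_lt_self t₀ (by positivity)) (half_lt_self ht₀)
    have hsfm : ∀ n, Measurable (fun u : Ioc (0:ℝ) t₀ => sf n (u : ℝ)) := fun n =>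
      ((measurable_subtype_coe.sub measurable_const).max
        (measurable_subtype_coe.div_const 2))
    have hmeas_h : ∀ n, Measurable[mD.prod inferInstance, msOP S]
        (fun p : DexpT S × Ioc (0:ℝ) t₀ => p.1.1 (sf n (p.2 : ℝ))) := fun n =>
      measurable_eval_of_upper mD (fun u : Ioc (0:ℝ) t₀ => sf n (u : ℝ)) (c n)
        (hsfm n) (hsf_nonneg n) (hsf_le_c n)
        (fun s h0 h1 => measurable_coord_filtLt h0 (lt_of_le_of_lt h1 (hc_lt n)))
    refine measurable_of_tendsto_metrizable
      (f := fun n (qq : {p : DexpT S × Ioc (0:ℝ) t₀ //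
          ∃ a : OnePoint S, Tendsto p.1.1 (𝓝[<] (p.2 : ℝ)) (𝓝 a)}) =>
        qq.1.1.1 (sf n (qq.1.2 : ℝ)))
      (fun n => (hmeas_h n).comp measurable_subtype_coe)
      (tendsto_pi_nhds.2 fun qq => ?_)
    have ht : (0 : ℝ) < (qq.1.2 : ℝ) := qq.1.2.2.1
    have hchoose : leftLimVal qq.1.1.1 (qq.1.2 : ℝ) = qq.2.choose := dif_pos qq.2
    rw [hchoose]
    have hsp : Tendsto qq.1.1.1 (𝓝[<] (qq.1.2 : ℝ)) (𝓝 qq.2.choose) := qq.2.choose_spec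
    refine hsp.comp ?_
    rw [tendsto_nhdsWithin_iff]
    constructor
    · have h := (tendsto_const_nhds (x := (qq.1.2 : ℝ)) (f := atTop (α := ℕ))|>.sub
        tendsto_one_div_add_atTop_nhds_zero_nat).max
        (tendsto_const_nhds (x := (qq.1.2 : ℝ) / 2) (f := atTop (α := ℕ)))
      rw [sub_zero, max_eq_left (by linarith : (qq.1.2 : ℝ) / 2 ≤ (qq.1.2 : ℝ))] at h
      exact h
    · refine Eventually.of_forall fun n => ?_
      have h1 : (qq.1.2 : ℝ) - 1 / ((n : ℝ) + 1) < (qq.1.2 : ℝ) := by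
        have : (0:ℝ) < 1 / ((n : ℝ) + 1) := by positivity
        linarith
      exact max_lt h1 (by linarith)

end LocSkor
end
end

section
/- A path x ∈ D_exp(S) belongs to D_loc(S) if and only if for every t ≥ 0 and every compact subset K ⊂ S, ω'_{t,K,x}(δ) → 0 as δ → 0. -/
open Filter Topology Set MeasureTheory
open scoped ENNReal NNReal

noncomputable section

namespace LocSkor

variable {S : Type*} [TopologicalSpace S]

/-! ### Auxiliary lemmas for Statement 5 -/

section OmegaModAux

variable {S : Type*} [MetricSpace S]

lemma dd_coe_coe (a b : S) : dd dist ((a : OnePoint S)) ((b : OnePoint S)) = dist a b := rfl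

lemma tendsto_coe_onePoint_iff {α : Type*} {l : Filter α} {f : α → S} {a : S} :
    Tendsto (fun n => ((f n : OnePoint S))) l (𝓝 (a : OnePoint S)) ↔ Tendsto f l (𝓝 a) :=
  (OnePoint.isOpenEmbedding_coe.isInducing.tendsto_nhds_iff).symm

lemma exists_right_window {x : Path S}
    (hrc : ∀ t : ℝ, 0 ≤ t → x t ≠ OnePoint.infty → Tendsto x (𝓝[>] t) (𝓝 (x t)))
    {v : ℝ} (hv : 0 ≤ v) {b : S} (hb : x v = (b : OnePoint S)) {c : ℝ} (hc : 0 < c) :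
    ∃ η > 0, ∀ s : ℝ, v < s → s < v + η →
      ∃ cc : S, x s = (cc : OnePoint S) ∧ dist b cc < c := by
  have h := hrc v hv (by rw [hb]; exact OnePoint.coe_ne_infty b)
  rw [hb] at h
  have hmem : ((fun a : S => (a : OnePoint S)) '' Metric.ball b c) ∈ 𝓝 ((b : OnePoint S)) := by
    rw [OnePoint.nhds_coe_eq]
    exact image_mem_map (Metric.ball_mem_nhds b hc)
  have h2 := h hmem
  rw [mem_map, mem_nhdsGT_iff_exists_Ioo_subset] at h2
  obtain ⟨u, hu, hsub⟩ := h2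
  have huv : v < u := hu
  refine ⟨u - v, by linarith, fun s hs1 hs2 => ?_⟩
  have hxs : x s ∈ (fun a : S => (a : OnePoint S)) '' Metric.ball b c :=
    hsub ⟨hs1, by linarith⟩
  obtain ⟨cc, hcc, hxs'⟩ := hxs
  exact ⟨cc, hxs'.symm, by simpa [dist_comm] using hcc⟩

lemma exists_uniform_gap {ts : ℕ → ℝ} {N : ℕ} (h : ∀ i < N, ts i < ts (i + 1)) :
    ∃ δ > 0, ∀ i < N, ts i + δ < ts (i + 1) := by
  induction N with
  | zero => exact ⟨1, one_pos, fun i hi => absurd hi (Nat.not_lt_zero i)⟩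
  | succ n ih =>
    obtain ⟨δ, hδ, hδ'⟩ := ih fun i hi => h i (hi.trans (Nat.lt_succ_self n))
    have hn := h n (Nat.lt_succ_self n)
    refine ⟨min δ ((ts (n + 1) - ts n) / 2), lt_min hδ (by linarith), fun i hi => ?_⟩
    rcases Nat.lt_succ_iff_lt_or_eq.mp hi with hi' | rfl
    · have h1 : ts i + min δ ((ts (n + 1) - ts n) / 2) ≤ ts i + δ :=
        add_le_add_right (min_le_left _ _) _
      exact lt_of_le_of_lt h1 (hδ' i hi')
    · have h1 : min δ ((ts (i + 1) - ts i) / 2) ≤ (ts (i + 1) - ts i) / 2 := min_le_right _ _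
      linarith

lemma find_interval {ts : ℕ → ℝ} {s : ℝ} (h0 : ts 0 ≤ s) {m : ℕ} (hm : s < ts m) :
    ∃ n < m, ts n ≤ s ∧ s < ts (n + 1) := by
  classical
  have hne : ∃ k, s < ts k := ⟨m, hm⟩
  have hk := Nat.find_spec hne
  have hk0 : Nat.find hne ≠ 0 := by
    intro h
    rw [h] at hk
    exact absurd hk (not_lt.mpr h0)
  obtain ⟨j, hj⟩ := Nat.exists_eq_succ_of_ne_zero hk0
  have hfind : Nat.find hne ≤ m := Nat.find_min' hne hm
  refine ⟨j, by omega, ?_, ?_⟩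
  · exact not_lt.mp (Nat.find_min hne (by omega))
  · rw [show j + 1 = Nat.find hne by omega]; exact hk

lemma partition_nonneg {ts : ℕ → ℝ} (h0 : ts 0 = 0) {N : ℕ}
    (h : ∀ i < N, ts i < ts (i + 1)) : ∀ i ≤ N, 0 ≤ ts i := by
  intro i
  induction i with
  | zero => intro _; exact le_of_eq h0.symm
  | succ n ih =>
    intro hi
    have h1 := ih (by omega)
    have h2 := h n (by omega)
    linarith

end OmegaModAux
section ForwardPartition

variable {S : Type*} [MetricSpace S]

lemma forward_partition [LocallyCompactSpace S] {x : Path S} (hx : IsDexp x)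
    (hloc : (explodes x ∧ 0 < xiR x ∧ IsCompact (closure (pathRange x))) →
      ∃ a : S, Tendsto x (𝓝[<] xiR x) (𝓝 (a : OnePoint S)))
    (t : ℝ) (ht : 0 ≤ t) (K : Set S) (hK : IsCompact K) (ε : ℝ) (hε : 0 < ε) :
    ∃ δ > 0, ∃ N : ℕ, ∃ ts : ℕ → ℝ, ts 0 = 0 ∧ (∀ i < N, ts i + δ < ts (i + 1)) ∧
      (∀ s : ℝ, 0 ≤ s → s < ts N → x s ≠ OnePoint.infty) ∧
      ¬(ts N ≤ t ∧ ∃ a ∈ K, x (ts N) = (a : OnePoint S)) ∧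
      (∀ i < N, ∀ s₁ : ℝ, ts i ≤ s₁ → s₁ < ts (i + 1) →
        ∀ s₂ : ℝ, ts i ≤ s₂ → s₂ < ts (i + 1) → dd dist (x s₁) (x s₂) ≤ ε) := by
  classical
  obtain ⟨hneg, hmono, hclosed, hrc, hll⟩ := hx
  obtain ⟨K₂, hK₂c, hKK₂⟩ := exists_compact_superset hK
  obtain ⟨r, hr, hrsub⟩ := hK.exists_cthickening_subset_open isOpen_interior hKK₂
  set K' : Set S := Metric.cthickening r K with hK'def
  have hK'c : IsCompact K' :=
    hK₂c.of_isClosed_subset Metric.isClosed_cthickening (hrsub.trans interior_subset)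
  have hKK' : K ⊆ K' := Metric.self_subset_cthickening K
  set ε' : ℝ := min (ε / 2) r with hε'def
  have hε'pos : 0 < ε' := lt_min (by linarith) hr
  have hε'half : ε' ≤ ε / 2 := min_le_left _ _
  have hε'r : ε' ≤ r := min_le_right _ _
  have hmemK' : ∀ a ∈ K, ∀ c : S, dist a c ≤ ε' → c ∈ K' := by
    intro a ha c hc
    exact Metric.mem_cthickening_of_dist_le c a r K ha (by rw [dist_comm]; linarith)
  set A : ℝ → Set ℝ := fun u =>
    {s | u < s ∧ (t + 1 < s ∨ x s = OnePoint.infty ∨ ε' < dd dist (x u) (x s))} with hAdef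
  set F : ℝ → ℝ := fun u => sInf (A u) with hFdef
  have hAne : ∀ u, (A u).Nonempty := fun u =>
    ⟨max u (t + 1) + 1, lt_of_le_of_lt (le_max_left u (t + 1)) (lt_add_one _),
      Or.inl (lt_of_le_of_lt (le_max_right u (t + 1)) (lt_add_one _))⟩
  have hAbdd : ∀ u, BddBelow (A u) := fun u => ⟨u, fun s hs => le_of_lt hs.1⟩
  have hnotA : ∀ u s : ℝ, s < F u → s ∉ A u := fun u s hsF hsA =>
    absurd (csInf_le (hAbdd u) hsA) (not_le.mpr hsF)
  have hInterval : ∀ u s : ℝ, u < s → s < F u →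
      s ≤ t + 1 ∧ x s ≠ OnePoint.infty ∧ dd dist (x u) (x s) ≤ ε' := by
    intro u s hus hsF
    have h1 := hnotA u s hsF
    simp only [hAdef, mem_setOf_eq, not_and, not_or, not_lt] at h1
    obtain ⟨ha, hb, hc⟩ := h1 hus
    exact ⟨ha, hb, hc⟩
  have hFgt : ∀ u : ℝ, 0 ≤ u → u ≤ t → ∀ b : S, x u = (b : OnePoint S) → u < F u := by
    intro u hu hut b hb
    obtain ⟨η, hη, hwin⟩ := exists_right_window hrc hu hb hε'pos
    set η' := min η (t + 1 - u) with hη'def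
    have hη'pos : 0 < η' := lt_min hη (by linarith)
    have hlb : ∀ s ∈ A u, u + η' ≤ s := by
      intro s hs
      by_contra hcon
      push_neg at hcon
      obtain ⟨hus, htrig⟩ := hs
      have hs1 : s < u + η :=
        lt_of_lt_of_le hcon (add_le_add_right (min_le_left _ _) u)
      obtain ⟨cc, hcc, hdcc⟩ := hwin s hus hs1
      rcases htrig with h1 | h1 | h1
      · have h2 : η' ≤ t + 1 - u := min_le_right _ _
        linarith
      · rw [hcc] at h1; exact OnePoint.coe_ne_infty cc h1
      · rw [hb, hcc, dd_coe_coe] at h1; linarith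
    have h2 : u + η' ≤ F u := le_csInf (hAne u) hlb
    have : u < u + η' := by linarith
    exact lt_of_lt_of_le this h2
  have hFdist : ∀ u v : ℝ, 0 ≤ u → 0 ≤ v → v = F u → v ≤ t → ∀ b c : S,
      x u = (b : OnePoint S) → x v = (c : OnePoint S) → ε' ≤ dist b c := by
    intro u v hu hv0 hv hvt b c hb hc
    by_contra hcon
    push_neg at hcon
    obtain ⟨η, hη, hwin⟩ := exists_right_window hrc hv0 hc (c := ε' - dist b c) (by linarith)
    set η' := min η (t + 1 - v) with hη'def
    have hη'pos : 0 < η' := lt_min hη (by linarith)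
    have hlb : ∀ s ∈ A u, v + η' ≤ s := by
      intro s hs
      by_contra hcon2
      push_neg at hcon2
      have hFle : F u ≤ s := csInf_le (hAbdd u) hs
      obtain ⟨hus, htrig⟩ := hs
      rcases lt_trichotomy s v with hsv | rfl | hsv
      · rw [hv] at hsv; exact absurd hFle (not_le.mpr hsv)
      · rcases htrig with h1 | h1 | h1
        · linarith
        · rw [hc] at h1; exact OnePoint.coe_ne_infty c h1
        · rw [hb, hc, dd_coe_coe] at h1; linarith
      · have hs1 : s < v + η :=
          lt_of_lt_of_le hcon2 (add_le_add_right (min_le_left _ _) v)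
        obtain ⟨cc, hcc, hdcc⟩ := hwin s hsv hs1
        rcases htrig with h1 | h1 | h1
        · have h2 : η' ≤ t + 1 - v := min_le_right _ _
          linarith
        · rw [hcc] at h1; exact OnePoint.coe_ne_infty cc h1
        · rw [hb, hcc, dd_coe_coe] at h1
          have h3 : dist b cc ≤ dist b c + dist c cc := dist_triangle _ _ _
          linarith
    have h2 : v + η' ≤ F u := le_csInf (hAne u) hlb
    rw [← hv] at h2
    linarith
  set ts : ℕ → ℝ := fun n => Nat.rec (motive := fun _ => ℝ) 0 (fun _ u => F u) n with htsdef
  have hts0 : ts 0 = 0 := rfl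
  have htsS : ∀ n, ts (n + 1) = F (ts n) := fun n => rfl
  have hEx : ∃ n, ¬(ts n ≤ t ∧ ∃ a ∈ K, x (ts n) = (a : OnePoint S)) := by
    by_contra hAll
    push_neg at hAll
    choose hle a haK hxa using hAll
    have hbasic : ∀ n, 0 ≤ ts n ∧ ts n < ts (n + 1) := by
      intro n
      induction n with
      | zero =>
        refine ⟨le_of_eq hts0.symm, ?_⟩
        rw [htsS 0]
        exact hFgt (ts 0) (le_of_eq hts0.symm) (hle 0) (a 0) (hxa 0)
      | succ n ih =>
        have h0 : 0 ≤ ts (n + 1) := le_of_lt (lt_of_le_of_lt ih.1 ih.2)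
        refine ⟨h0, ?_⟩
        rw [htsS (n + 1)]
        exact hFgt (ts (n + 1)) h0 (hle (n + 1)) (a (n + 1)) (hxa (n + 1))
    have hmonots : Monotone ts := monotone_nat_of_le_succ fun n => le_of_lt (hbasic n).2
    have hbddts : BddAbove (Set.range ts) := ⟨t, by rintro y ⟨n, rfl⟩; exact hle n⟩
    set L : ℝ := ⨆ n, ts n with hLdef
    have htsL : ∀ n, ts n < L := fun n =>
      lt_of_lt_of_le (hbasic n).2 (le_ciSup hbddts (n + 1))
    have hLt : L ≤ t := ciSup_le hle
    have htdL : Tendsto ts atTop (𝓝 L) := tendsto_atTop_ciSup hmonots hbddts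
    have hLpos : 0 < L := lt_of_le_of_lt (hbasic 0).1 (htsL 0)
    have hrange : ∀ s : ℝ, 0 ≤ s → s < L → ∃ c ∈ K', x s = (c : OnePoint S) := by
      intro s hs0 hsL
      obtain ⟨m, hm⟩ := (htdL.eventually (eventually_gt_nhds hsL)).exists
      obtain ⟨n, -, hn1, hn2⟩ := find_interval (le_trans (le_of_eq hts0) hs0) hm
      rcases eq_or_lt_of_le hn1 with heq | hlt
      · exact ⟨a n, hKK' (haK n), heq ▸ hxa n⟩
      · obtain ⟨-, hne, hdd⟩ := hInterval (ts n) s hlt (by rw [← htsS n]; exact hn2)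
        obtain ⟨c, hc⟩ := OnePoint.ne_infty_iff_exists.mp hne
        rw [hxa n, ← hc, dd_coe_coe] at hdd
        exact ⟨c, hmemK' (a n) (haK n) c hdd, hc.symm⟩
    have hlim : ∃ b : S, Tendsto x (𝓝[<] L) (𝓝 (b : OnePoint S)) := by
      by_cases hxL : x L = OnePoint.infty
      · have hmem : L ∈ xiSet x := hxL
        have hlb : ∀ s ∈ xiSet x, L ≤ s := by
          intro s hs
          by_contra hcon
          push_neg at hcon
          have hs' : x s = OnePoint.infty := hs
          rcases le_or_gt 0 s with h0 | h0
          · obtain ⟨c, -, hc⟩ := hrange s h0 hcon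
            exact OnePoint.coe_ne_infty c (hc.symm.trans hs')
          · have hs0 : x s = x 0 := hneg s (le_of_lt h0)
            have hx0 : x 0 = ((a 0 : S) : OnePoint S) := by
              have := hxa 0; rw [hts0] at this; exact this
            exact OnePoint.coe_ne_infty (a 0) ((hx0.symm.trans (hs0.symm.trans hs')))
        have hxiR : xiR x = L :=
          le_antisymm (csInf_le ⟨L, hlb⟩ hmem) (le_csInf ⟨L, hmem⟩ hlb)
        have hcomp : IsCompact (closure (pathRange x)) := by
          have hsub : pathRange x ⊆ K' := by
            rintro c ⟨s, hs0, hsc⟩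
            rcases lt_or_ge s L with hsL | hsL
            · obtain ⟨c', hc', hc'eq⟩ := hrange s hs0 hsL
              rwa [OnePoint.coe_eq_coe.mp (hsc.symm.trans hc'eq)]
            · exact absurd (hmono hsL hxL) (by rw [hsc]; exact OnePoint.coe_ne_infty c)
          exact hK'c.of_isClosed_subset isClosed_closure
            (closure_minimal hsub Metric.isClosed_cthickening)
        obtain ⟨b, hb⟩ := hloc ⟨⟨L, hmem⟩, by rw [hxiR]; exact hLpos, hcomp⟩
        rw [hxiR] at hb
        exact ⟨b, hb⟩
      · exact hll L hLpos hxL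
    obtain ⟨b, hb⟩ := hlim
    have htsnL : Tendsto (fun n => x (ts n)) atTop (𝓝 (b : OnePoint S)) :=
      hb.comp (tendsto_nhdsWithin_of_tendsto_nhds_of_eventually_within ts htdL
        (Eventually.of_forall fun n => htsL n))
    have han : Tendsto (fun n => ((a n : S) : OnePoint S)) atTop (𝓝 (b : OnePoint S)) := by
      have heq : (fun n => ((a n : S) : OnePoint S)) = fun n => x (ts n) :=
        funext fun n => (hxa n).symm
      rw [heq]; exact htsnL
    have hanS : Tendsto a atTop (𝓝 b) := tendsto_coe_onePoint_iff.mp han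
    have hdist0 : Tendsto (fun n => dist (a n) (a (n + 1))) atTop (𝓝 0) := by
      have h2 : Tendsto (fun n => a (n + 1)) atTop (𝓝 b) :=
        hanS.comp (tendsto_add_atTop_nat 1)
      simpa using hanS.dist h2
    have hlbd : ∀ n, ε' ≤ dist (a n) (a (n + 1)) := fun n =>
      hFdist (ts n) (ts (n + 1)) (hbasic n).1
        (le_of_lt (lt_of_le_of_lt (hbasic n).1 (hbasic n).2)) (htsS n) (hle (n + 1))
        (a n) (a (n + 1)) (hxa n) (hxa (n + 1))
    have hfin : ε' ≤ 0 := ge_of_tendsto hdist0 (Eventually.of_forall hlbd)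
    linarith
  set N := Nat.find hEx with hNdef
  have hstop := Nat.find_spec hEx
  have hpre : ∀ i < N, ts i ≤ t ∧ ∃ a ∈ K, x (ts i) = (a : OnePoint S) := fun i hi =>
    not_not.mp (Nat.find_min hEx hi)
  have hbasic : ∀ i, i < N → 0 ≤ ts i ∧ ts i < ts (i + 1) := by
    intro i
    induction i with
    | zero =>
      intro hi
      obtain ⟨hle0, a0, ha0, hx0⟩ := hpre 0 hi
      refine ⟨le_of_eq hts0.symm, ?_⟩
      rw [htsS 0]
      exact hFgt (ts 0) (le_of_eq hts0.symm) hle0 a0 hx0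
    | succ n ih =>
      intro hi
      have hn : n < N := Nat.lt_of_succ_lt hi
      have ihn := ih hn
      obtain ⟨hle1, a1, ha1, hx1⟩ := hpre (n + 1) hi
      have h0 : 0 ≤ ts (n + 1) := le_of_lt (lt_of_le_of_lt ihn.1 ihn.2)
      refine ⟨h0, ?_⟩
      rw [htsS (n + 1)]
      exact hFgt (ts (n + 1)) h0 hle1 a1 hx1
  have hmono' : ∀ i < N, ts i < ts (i + 1) := fun i hi => (hbasic i hi).2
  obtain ⟨δ, hδpos, hδ⟩ := exists_uniform_gap hmono'
  refine ⟨δ, hδpos, N, ts, hts0, hδ, ?_, hstop, ?_⟩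
  · intro s hs0 hsN
    obtain ⟨n, hnN, hn1, hn2⟩ := find_interval (le_trans (le_of_eq hts0) hs0) hsN
    rcases eq_or_lt_of_le hn1 with heq | hlt
    · obtain ⟨-, a1, -, hx1⟩ := hpre n hnN
      rw [← heq, hx1]
      exact OnePoint.coe_ne_infty a1
    · exact (hInterval (ts n) s hlt (by rw [← htsS n]; exact hn2)).2.1
  · intro i hi s₁ h11 h12 s₂ h21 h22
    obtain ⟨-, ai, -, hxi⟩ := hpre i hi
    have hval : ∀ s : ℝ, ts i ≤ s → s < ts (i + 1) →
        ∃ c : S, x s = (c : OnePoint S) ∧ dist ai c ≤ ε' := by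
      intro s hs1 hs2
      rcases eq_or_lt_of_le hs1 with heq | hlt
      · exact ⟨ai, heq ▸ hxi, by rw [dist_self]; exact le_of_lt hε'pos⟩
      · obtain ⟨-, hne, hdd⟩ := hInterval (ts i) s hlt (by rw [← htsS i]; exact hs2)
        obtain ⟨c, hc⟩ := OnePoint.ne_infty_iff_exists.mp hne
        rw [hxi, ← hc, dd_coe_coe] at hdd
        exact ⟨c, hc.symm, hdd⟩
    obtain ⟨c₁, hc₁, hd₁⟩ := hval s₁ h11 h12
    obtain ⟨c₂, hc₂, hd₂⟩ := hval s₂ h21 h22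
    rw [hc₁, hc₂, dd_coe_coe]
    calc dist c₁ c₂ ≤ dist c₁ ai + dist ai c₂ := dist_triangle _ _ _
    _ ≤ ε' + ε' := add_le_add (by rw [dist_comm]; exact hd₁) hd₂
    _ ≤ ε := by linarith

end ForwardPartition
/-- (Proposition 2.8 i)). A path `x ∈ 𝔻_exp(S)` belongs to `𝔻_loc(S)` if
and only if for every `t ≥ 0` and every compact `K ⊆ S`, `ω'_{t,K,x}(δ) → 0` as `δ → 0`. -/
theorem isDloc_iff_omegaMod
    {S : Type*} [MetricSpace S] [SecondCountableTopology S] [LocallyCompactSpace S]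
    (x : Path S) (hx : IsDexp x) :
    IsDloc x ↔
      ∀ t : ℝ, 0 ≤ t → ∀ K : Set S, IsCompact K →
        Tendsto (fun δ : ℝ => omegaMod dist t K x δ) (𝓝[>] (0:ℝ)) (𝓝 0) := by
  constructor
  · rintro ⟨hx', hloc⟩ t ht K hK
    rw [ENNReal.tendsto_nhds_zero]
    intro εe hεe
    obtain ⟨e, he, hee⟩ : ∃ e : ℝ, 0 < e ∧ ENNReal.ofReal e ≤ εe := by
      rcases eq_or_ne εe ⊤ with rfl | hne
      · exact ⟨1, one_pos, le_top⟩
      · exact ⟨εe.toReal, ENNReal.toReal_pos (ne_of_gt hεe) hne,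
          le_of_eq (ENNReal.ofReal_toReal hne)⟩
    obtain ⟨δ, hδpos, N, ts, h0, hgap, hnoexp, hend, hosc⟩ :=
      forward_partition hx' hloc t ht K hK e he
    filter_upwards [Ioo_mem_nhdsGT hδpos] with δ' hδ'
    have hcond : ts 0 = 0 ∧ (∀ i < N, ts i + δ' < ts (i + 1)) ∧
        (∀ s : ℝ, 0 ≤ s → s < ts N → x s ≠ OnePoint.infty) ∧
        ¬(ts N ≤ t ∧ ∃ a ∈ K, x (ts N) = (a : OnePoint S)) :=
      ⟨h0, fun i hi => lt_trans (by linarith [hδ'.2]) (hgap i hi), hnoexp, hend⟩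
    refine le_trans (le_trans (iInf₂_le ((⟨N, ts⟩ : ℕ × (ℕ → ℝ))) hcond) ?_) hee
    refine iSup₂_le fun i hi => iSup₂_le fun s₁ hs₁ => iSup₂_le fun s₂ hs₂ => ?_
    exact ENNReal.ofReal_le_ofReal (hosc i hi s₁ hs₁.1 hs₁.2 s₂ hs₂.1 hs₂.2)
  · intro h
    refine ⟨hx, ?_⟩
    rintro ⟨hexp, hxiRpos, hcomp⟩
    obtain ⟨hneg, hmono, hclosed, hrc, hll⟩ := hx
    have hbb : BddBelow (xiSet x) := by
      by_contra hbb
      have h0 : xiR x = 0 := Real.sInf_of_not_bddBelow hbb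
      rw [h0] at hxiRpos
      exact lt_irrefl 0 hxiRpos
    have hximem : x (xiR x) = OnePoint.infty := hclosed.csInf_mem hexp hbb
    have hxipos : 0 ≤ xiR x := le_of_lt hxiRpos
    have hpreξ : ∀ s : ℝ, 0 ≤ s → s < xiR x → x s ≠ OnePoint.infty := by
      intro s _ hs hcon
      exact absurd (csInf_le hbb hcon) (not_le.mpr hs)
    have hKset : ∀ s : ℝ, 0 ≤ s → s < xiR x →
        ∃ c ∈ closure (pathRange x), x s = (c : OnePoint S) := by
      intro s hs0 hs
      obtain ⟨c, hc⟩ := OnePoint.ne_infty_iff_exists.mp (hpreξ s hs0 hs)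
      exact ⟨c, subset_closure ⟨s, hs0, hc.symm⟩, hc.symm⟩
    have hcauchy : ∀ e : ℝ, 0 < e → ∃ t', 0 ≤ t' ∧ t' < xiR x ∧
        ∀ s₁ : ℝ, t' ≤ s₁ → s₁ < xiR x → ∀ s₂ : ℝ, t' ≤ s₂ → s₂ < xiR x →
          dd dist (x s₁) (x s₂) < e := by
      intro e he
      have htd := h (xiR x) hxipos (closure (pathRange x)) hcomp
      have hev := htd.eventually (eventually_lt_nhds (ENNReal.ofReal_pos.mpr he))
      obtain ⟨δ, hδlt, hδpos⟩ := (hev.and eventually_mem_nhdsWithin).exists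
      simp only [omegaMod] at hδlt
      rw [iInf_lt_iff] at hδlt
      obtain ⟨⟨N, ts⟩, hδlt⟩ := hδlt
      rw [iInf_lt_iff] at hδlt
      obtain ⟨⟨h0, hgap, hnoexp, hend⟩, hval⟩ := hδlt
      dsimp only at h0 hgap hnoexp hend hval
      have hδ0 : (0:ℝ) < δ := hδpos
      have hmonots : ∀ i < N, ts i < ts (i + 1) := fun i hi =>
        lt_trans (by linarith) (hgap i hi)
      have hts_nonneg := partition_nonneg h0 hmonots
      have htsNle : ts N ≤ xiR x := by
        by_contra hcon
        push_neg at hcon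
        exact hnoexp (xiR x) hxipos hcon hximem
      have htsNge : xiR x ≤ ts N := by
        by_contra hcon
        push_neg at hcon
        obtain ⟨c, hc, hxc⟩ := hKset (ts N) (hts_nonneg N le_rfl) hcon
        exact hend ⟨le_of_lt hcon, c, hc, hxc⟩
      have htsN : ts N = xiR x := le_antisymm htsNle htsNge
      have hN0 : N ≠ 0 := by
        intro hN
        rw [hN, h0] at htsN
        exact ne_of_lt hxiRpos htsN
      obtain ⟨M, hM⟩ : ∃ M, N = M + 1 := ⟨N - 1, by omega⟩
      have hMN : M < N := by omega
      have hMsucc : ts (M + 1) = xiR x := by rw [← hM]; exact htsN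
      refine ⟨ts M, hts_nonneg M (by omega), ?_, ?_⟩
      · rw [← hMsucc]; exact hmonots M hMN
      · intro s₁ h11 h12 s₂ h21 h22
        have hs₁' : ts M ≤ s₁ ∧ s₁ < ts (M + 1) := ⟨h11, by rw [hMsucc]; exact h12⟩
        have hs₂' : ts M ≤ s₂ ∧ s₂ < ts (M + 1) := ⟨h21, by rw [hMsucc]; exact h22⟩
        have hlt : ENNReal.ofReal (dd dist (x s₁) (x s₂)) < ENNReal.ofReal e := by
          refine lt_of_le_of_lt ?_ hval
          have c2 : ENNReal.ofReal (dd dist (x s₁) (x s₂)) ≤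
              ⨆ s₂' : ℝ, ⨆ (_ : ts M ≤ s₂' ∧ s₂' < ts (M + 1)),
                ENNReal.ofReal (dd dist (x s₁) (x s₂')) :=
            le_iSup₂ (f := fun (s₂' : ℝ) (_ : ts M ≤ s₂' ∧ s₂' < ts (M + 1)) =>
              ENNReal.ofReal (dd dist (x s₁) (x s₂'))) s₂ hs₂'
          have c1 : (⨆ s₂' : ℝ, ⨆ (_ : ts M ≤ s₂' ∧ s₂' < ts (M + 1)),
                ENNReal.ofReal (dd dist (x s₁) (x s₂'))) ≤
              ⨆ s₁' : ℝ, ⨆ (_ : ts M ≤ s₁' ∧ s₁' < ts (M + 1)),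
                ⨆ s₂' : ℝ, ⨆ (_ : ts M ≤ s₂' ∧ s₂' < ts (M + 1)),
                  ENNReal.ofReal (dd dist (x s₁') (x s₂')) :=
            le_iSup₂ (f := fun (s₁' : ℝ) (_ : ts M ≤ s₁' ∧ s₁' < ts (M + 1)) =>
              ⨆ s₂' : ℝ, ⨆ (_ : ts M ≤ s₂' ∧ s₂' < ts (M + 1)),
                ENNReal.ofReal (dd dist (x s₁') (x s₂'))) s₁ hs₁'
          have c0 : (⨆ s₁' : ℝ, ⨆ (_ : ts M ≤ s₁' ∧ s₁' < ts (M + 1)),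
                ⨆ s₂' : ℝ, ⨆ (_ : ts M ≤ s₂' ∧ s₂' < ts (M + 1)),
                  ENNReal.ofReal (dd dist (x s₁') (x s₂'))) ≤
              ⨆ i : ℕ, ⨆ (_ : i < N),
                ⨆ s₁' : ℝ, ⨆ (_ : ts i ≤ s₁' ∧ s₁' < ts (i + 1)),
                  ⨆ s₂' : ℝ, ⨆ (_ : ts i ≤ s₂' ∧ s₂' < ts (i + 1)),
                    ENNReal.ofReal (dd dist (x s₁') (x s₂')) :=
            le_iSup₂ (f := fun (i : ℕ) (_ : i < N) =>
              ⨆ s₁' : ℝ, ⨆ (_ : ts i ≤ s₁' ∧ s₁' < ts (i + 1)),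
                ⨆ s₂' : ℝ, ⨆ (_ : ts i ≤ s₂' ∧ s₂' < ts (i + 1)),
                  ENNReal.ofReal (dd dist (x s₁') (x s₂'))) M hMN
          exact c2.trans (c1.trans c0)
        have hdd0 : 0 ≤ dd dist (x s₁) (x s₂) := by
          rcases hs : x s₁ with _ | c₁
          · exact le_refl 0
          · rcases hs2 : x s₂ with _ | c₂
            · exact le_refl 0
            · exact dist_nonneg
        exact (ENNReal.ofReal_lt_ofReal_iff he).mp hlt
    choose t' ht'0 ht'ξ hbound using fun n : ℕ => hcauchy (1 / ((n : ℝ) + 1)) (by positivity)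
    have hsq : ∀ n : ℕ, t' n ≤ (t' n + xiR x) / 2 ∧ (t' n + xiR x) / 2 < xiR x := by
      intro n
      have hn := ht'ξ n
      constructor <;> linarith
    have hsq0 : ∀ n : ℕ, 0 ≤ (t' n + xiR x) / 2 := fun n => le_trans (ht'0 n) (hsq n).1
    have hc : ∀ n : ℕ, ∃ c ∈ closure (pathRange x),
        x ((t' n + xiR x) / 2) = (c : OnePoint S) :=
      fun n => hKset _ (hsq0 n) (hsq n).2
    choose c hcK hxc using hc
    obtain ⟨a, haK, φ, hφ, hφlim⟩ := hcomp.tendsto_subseq hcK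
    refine ⟨a, ?_⟩
    rw [OnePoint.nhds_coe_eq]
    refine ((Metric.nhds_basis_ball.map ((↑) : S → OnePoint S)).tendsto_right_iff).mpr ?_
    intro η hη
    obtain ⟨n, hn⟩ := exists_nat_one_div_lt (show (0:ℝ) < η / 3 by linarith)
    obtain ⟨J, hJ⟩ := Metric.tendsto_atTop.mp hφlim (η / 3) (by linarith)
    have hdj : dist (c (φ (max J n))) a < η / 3 := hJ (max J n) (le_max_left _ _)
    set m := φ (max J n) with hm
    have hmn : (n : ℝ) ≤ (m : ℝ) := by
      have h1 : max J n ≤ φ (max J n) := hφ.le_apply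
      have h2 : n ≤ max J n := le_max_right _ _
      exact_mod_cast le_trans h2 h1
    have hfrac : 1 / ((m : ℝ) + 1) ≤ 1 / ((n : ℝ) + 1) :=
      one_div_le_one_div_of_le (by positivity) (by linarith)
    have hn' : 1 / ((n : ℝ) + 1) < η / 3 := by
      have : ((n : ℝ) + 1) = (n + 1 : ℕ) := by push_cast; ring
      calc 1 / ((n : ℝ) + 1) = 1 / ((n : ℕ) + 1 : ℝ) := by norm_num
      _ < η / 3 := hn
    filter_upwards [Ioo_mem_nhdsLT (ht'ξ m)] with s hs
    have hsm : dd dist (x s) (x ((t' m + xiR x) / 2)) < 1 / ((m : ℝ) + 1) :=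
      hbound m s (le_of_lt hs.1) hs.2 ((t' m + xiR x) / 2) (hsq m).1 (hsq m).2
    have hs0 : 0 ≤ s := le_trans (ht'0 m) (le_of_lt hs.1)
    obtain ⟨cc, -, hxcc⟩ := hKset s hs0 hs.2
    rw [hxcc, hxc m, dd_coe_coe] at hsm
    refine ⟨cc, ?_, hxcc.symm⟩
    rw [Metric.mem_ball]
    have hdj' : dist (c m) a < η / 3 := hdj
    calc dist cc a ≤ dist cc (c m) + dist (c m) a := dist_triangle _ _ _
    _ < 1 / ((m : ℝ) + 1) + η / 3 := by linarith
    _ ≤ 1 / ((n : ℝ) + 1) + η / 3 := by linarith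
    _ < η := by linarith

end LocSkor
end
end
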